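/- Let P_n = p_1 p_2 ⋯ p_n denote the n-th primorial. For every positive integer m with m < P_n, one has φ̄(m) > φ̄(P_n). -/

import Mathlib

open Finset

/-- `φ̄ n = φ n / n`, as a rational-valued function. -/
def phiBar (n : ℕ) : ℚ := (Nat.totient n : ℚ) / n

/-- The sequence of primes in increasing order (0-indexed:
`nthPrime 0 = 2`, `nthPrime 1 = 3`, ...). -/
noncomputable def nthPrime (n : ℕ) : ℕ := Nat.nth Nat.Prime n

/-- The `n`-th primorial `P n = p_1 * p_2 * ⋯ * p_n`. -/
noncomputable def primorialSeq (n : ℕ) : ℕ := ∏ i ∈ Finset.range n, nthPrime i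

lemma nthPrime_prime (i : ℕ) : (nthPrime i).Prime := Nat.prime_nth_prime i

lemma nthPrime_injective : Function.Injective nthPrime :=
  Nat.nth_injective Nat.infinite_setOf_prime

lemma nthPrime_pos (i : ℕ) : 0 < nthPrime i := (nthPrime_prime i).pos

lemma le_strictMono_fin {k : ℕ} {f : Fin k → ℕ} (hf : StrictMono f) :
    ∀ i : Fin k, (i : ℕ) ≤ f i := by
  have H : ∀ j : ℕ, ∀ i : Fin k, (i : ℕ) = j → j ≤ f i := by
    intro j
    induction j with
    | zero => intro i _; exact Nat.zero_le _
    | succ j ih =>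
      intro i hi
      have hj : j < k := by omega
      have hlt : (⟨j, hj⟩ : Fin k) < i := by
        simp only [Fin.lt_def, hi]; omega
      have h1 : j ≤ f ⟨j, hj⟩ := ih _ rfl
      have h2 : f ⟨j, hj⟩ < f i := hf hlt
      omega
  exact fun i => H (i : ℕ) i rfl

/-- Key lemma: product over a finset of size `k` of a monotone nonneg function
dominates the product over `range k`. -/
lemma prod_range_le_prod {R : Type*} [CommSemiring R] [PartialOrder R] [IsOrderedRing R] {k : ℕ} (I : Finset ℕ)
    (hk : I.card = k) (g : ℕ → R) (hg : Monotone g) (h0 : ∀ j, 0 ≤ g j) :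
    ∏ j ∈ Finset.range k, g j ≤ ∏ j ∈ I, g j := by
  have he : ∏ j ∈ I, g j = ∏ i : Fin k, g (I.orderEmbOfFin hk i) := by
    refine (Finset.prod_bij (fun i _ => I.orderEmbOfFin hk i) ?_ ?_ ?_ ?_).symm
    · intro a _; exact I.orderEmbOfFin_mem hk a
    · intro a _ b _ h; exact (I.orderEmbOfFin hk).injective h
    · intro b hb
      obtain ⟨i, hi⟩ := (Set.ext_iff.mp (I.range_orderEmbOfFin hk) b).mpr hb
      exact ⟨i, Finset.mem_univ i, hi⟩
    · intro a _; rfl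
  rw [he, ← Fin.prod_univ_eq_prod_range]
  refine Finset.prod_le_prod (fun i _ => h0 _) (fun i _ => hg ?_)
  exact le_strictMono_fin (I.orderEmbOfFin hk).strictMono i

lemma phiBar_eq (m : ℕ) (hm : m ≠ 0) :
    phiBar m = ∏ p ∈ m.primeFactors, (1 - (p : ℚ)⁻¹) := by
  unfold phiBar
  have hc : (m : ℚ) ≠ 0 := by exact_mod_cast hm
  rw [Nat.totient_eq_mul_prod_factors, mul_comm, mul_div_assoc, div_self hc, mul_one]

lemma primeFactors_primorialSeq (n : ℕ) :
    (primorialSeq n).primeFactors = (Finset.range n).image nthPrime := by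
  unfold primorialSeq
  have hinj : ∀ a ∈ Finset.range n, ∀ b ∈ Finset.range n, nthPrime a = nthPrime b → a = b :=
    fun a _ b _ h => nthPrime_injective h
  rw [show ∏ i ∈ Finset.range n, nthPrime i = ∏ p ∈ (Finset.range n).image nthPrime, p from
    (Finset.prod_image (f := fun p => p) hinj).symm]
  exact Nat.primeFactors_prod (fun p hp => by
    obtain ⟨i, _, rfl⟩ := Finset.mem_image.mp hp
    exact nthPrime_prime i)

lemma phiBar_primorial (n : ℕ) :
    phiBar (primorialSeq n) = ∏ i ∈ Finset.range n, (1 - (nthPrime i : ℚ)⁻¹) := by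
  have hpos : primorialSeq n ≠ 0 := by
    unfold primorialSeq; exact (Finset.prod_pos (fun i _ => nthPrime_pos i)).ne'
  rw [phiBar_eq _ hpos, primeFactors_primorialSeq,
    Finset.prod_image (g := nthPrime) (fun a _ b _ h => nthPrime_injective h)]

lemma g_pos (i : ℕ) : (0 : ℚ) < 1 - (nthPrime i : ℚ)⁻¹ := by
  have h2 : (1 : ℚ) < (nthPrime i : ℚ) := by exact_mod_cast (nthPrime_prime i).one_lt
  have := inv_lt_one_of_one_lt₀ h2
  linarith

lemma g_lt_one (i : ℕ) : (1 - (nthPrime i : ℚ)⁻¹) < 1 := by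
  have : (0 : ℚ) < (nthPrime i : ℚ)⁻¹ :=
    inv_pos.mpr (by exact_mod_cast nthPrime_pos i)
  linarith

lemma g_mono : Monotone (fun j => 1 - (nthPrime j : ℚ)⁻¹) := by
  intro a b hab
  simp only
  have h := Nat.nth_monotone Nat.infinite_setOf_prime hab
  have ha : (0 : ℚ) < (nthPrime a : ℚ) := by exact_mod_cast nthPrime_pos a
  have : (nthPrime b : ℚ)⁻¹ ≤ (nthPrime a : ℚ)⁻¹ := by
    apply inv_anti₀ ha; exact_mod_cast h
  linarith

theorem sylvester_stmt15 (n m : ℕ) (hm : 1 ≤ m) (hlt : m < primorialSeq n) :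
    phiBar (primorialSeq n) < phiBar m := by
  classical
  set S := m.primeFactors with hS
  set k := S.card with hkdef
  set I := S.image (Nat.count Nat.Prime) with hI
  have hSprime : ∀ q ∈ S, q.Prime := fun q hq => Nat.prime_of_mem_primeFactors hq
  have hcount : ∀ q ∈ S, nthPrime (Nat.count Nat.Prime q) = q :=
    fun q hq => Nat.nth_count (hSprime q hq)
  have hinj : ∀ a ∈ S, ∀ b ∈ S, Nat.count Nat.Prime a = Nat.count Nat.Prime b → a = b := by
    intro a ha b hb h
    rw [← hcount a ha, ← hcount b hb, h]
  have hIcard : I.card = k := Finset.card_image_of_injOn hinj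
  have hfactN : ∏ j ∈ I, nthPrime j = ∏ q ∈ S, q := by
    rw [hI, Finset.prod_image hinj]
    exact Finset.prod_congr rfl (fun q hq => hcount q hq)
  have hfactQ : ∏ j ∈ I, (1 - (nthPrime j : ℚ)⁻¹) = ∏ q ∈ S, (1 - (q : ℚ)⁻¹) := by
    rw [hI, Finset.prod_image hinj]
    exact Finset.prod_congr rfl (fun q hq => by rw [hcount q hq])
  have hkn : k < n := by
    by_contra hcon
    push_neg at hcon
    have h1 : primorialSeq n ≤ ∏ j ∈ Finset.range k, nthPrime j := by
      unfold primorialSeq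
      exact Finset.prod_le_prod_of_subset_of_one_le' (Finset.range_subset_range.mpr hcon)
        (fun i _ _ => nthPrime_pos i)
    have h2 : ∏ j ∈ Finset.range k, nthPrime j ≤ ∏ j ∈ I, nthPrime j :=
      prod_range_le_prod I hIcard nthPrime
        (Nat.nth_monotone Nat.infinite_setOf_prime) (fun j => Nat.zero_le _)
    have h3 : ∏ q ∈ S, q ≤ m := Nat.le_of_dvd hm (Nat.prod_primeFactors_dvd m)
    rw [hfactN] at h2
    omega
  have hmQ : phiBar m = ∏ j ∈ I, (1 - (nthPrime j : ℚ)⁻¹) := by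
    rw [phiBar_eq m (by omega), ← hfactQ]
  rw [hmQ, phiBar_primorial n]
  have hge : ∏ j ∈ Finset.range k, (1 - (nthPrime j : ℚ)⁻¹) ≤
      ∏ j ∈ I, (1 - (nthPrime j : ℚ)⁻¹) :=
    prod_range_le_prod I hIcard _ g_mono (fun j => (g_pos j).le)
  have hsplit : ∏ j ∈ Finset.range n, (1 - (nthPrime j : ℚ)⁻¹) =
      (∏ j ∈ Finset.range k, (1 - (nthPrime j : ℚ)⁻¹)) *
        ∏ j ∈ Finset.Ico k n, (1 - (nthPrime j : ℚ)⁻¹) := by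
    rw [Finset.range_eq_Ico, Finset.range_eq_Ico, Finset.prod_Ico_consecutive _ (Nat.zero_le k) hkn.le]
  have hIco : ∏ j ∈ Finset.Ico k n, (1 - (nthPrime j : ℚ)⁻¹) < 1 := by
    have hkmem : k ∈ Finset.Ico k n := Finset.mem_Ico.mpr ⟨le_rfl, hkn⟩
    rw [← Finset.mul_prod_erase _ _ hkmem]
    have ht1 : ∏ j ∈ (Finset.Ico k n).erase k, (1 - (nthPrime j : ℚ)⁻¹) ≤ 1 :=
      Finset.prod_le_one (fun j _ => (g_pos j).le) (fun j _ => (g_lt_one j).le)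
    have ht0 : (0 : ℚ) ≤ ∏ j ∈ (Finset.Ico k n).erase k, (1 - (nthPrime j : ℚ)⁻¹) :=
      Finset.prod_nonneg (fun j _ => (g_pos j).le)
    calc (1 - (nthPrime k : ℚ)⁻¹) * ∏ j ∈ (Finset.Ico k n).erase k, (1 - (nthPrime j : ℚ)⁻¹)
        ≤ (1 - (nthPrime k : ℚ)⁻¹) * 1 := by
          exact mul_le_mul_of_nonneg_left ht1 (g_pos k).le
      _ = 1 - (nthPrime k : ℚ)⁻¹ := mul_one _
      _ < 1 := g_lt_one k
  have hposk : (0 : ℚ) < ∏ j ∈ Finset.range k, (1 - (nthPrime j : ℚ)⁻¹) :=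
    Finset.prod_pos (fun j _ => g_pos j)
  calc ∏ j ∈ Finset.range n, (1 - (nthPrime j : ℚ)⁻¹)
      = (∏ j ∈ Finset.range k, (1 - (nthPrime j : ℚ)⁻¹)) *
          ∏ j ∈ Finset.Ico k n, (1 - (nthPrime j : ℚ)⁻¹) := hsplit
    _ < (∏ j ∈ Finset.range k, (1 - (nthPrime j : ℚ)⁻¹)) * 1 :=
        mul_lt_mul_of_pos_left hIco hposk
    _ = ∏ j ∈ Finset.range k, (1 - (nthPrime j : ℚ)⁻¹) := mul_one _
    _ ≤ ∏ j ∈ I, (1 - (nthPrime j : ℚ)⁻¹) := hge
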